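/- (Theorem 7.1, uniform boundedness and ultimate bound) For all t ≥ 0, ‖e(t) + x̃(t)‖_∞ ≤ √(ρ* / λ_min(P)) · (1 + √(κ λ_max(P) / (2 ξ λ_min(R)))), where ρ* := max( V*(e(0), W̃(0), 0, 0), γ^{-1} ‖Λ‖_F w̃_max² + c₄ λ_max(P) / ((1 − ξ) λ_min(R)) ); since x(t) − x_ri(t) = e(t) + x̃(t), this establishes uniform boundedness of the distance between the plant state and the ideal reference state under time-varying uncertainties. -/

import Mathlib

open Matrix Filter

noncomputable section

/-- Euclidean norm ‖·‖₂ of a vector. -/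
def norm2 {n : ℕ} (v : Fin n → ℝ) : ℝ := Real.sqrt (∑ i, v i ^ 2)

/-- Supremum (infinity) norm ‖·‖_∞ of a vector (the sup norm on `Fin n → ℝ`). -/
def normInf {n : ℕ} (v : Fin n → ℝ) : ℝ := ‖v‖

/-- Frobenius norm ‖·‖_F of a matrix. -/
def normF {N m : ℕ} (W : Matrix (Fin N) (Fin m) ℝ) : ℝ := Real.sqrt (∑ i, ∑ j, W i j ^ 2)

/-- Smallest eigenvalue λ_min of a real symmetric (Hermitian) matrix. -/
def lamMin {n : ℕ} {A : Matrix (Fin n) (Fin n) ℝ} (hA : A.IsHermitian) : ℝ := ⨅ i, hA.eigenvalues i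

/-- Largest eigenvalue λ_max of a real symmetric (Hermitian) matrix. -/
def lamMax {n : ℕ} {A : Matrix (Fin n) (Fin n) ℝ} (hA : A.IsHermitian) : ℝ := ⨆ i, hA.eigenvalues i

/-- A real square matrix is Hurwitz if every (complex) eigenvalue has negative real part. -/
def Hurwitz {n : ℕ} (A : Matrix (Fin n) (Fin n) ℝ) : Prop :=
  ∀ μ : ℂ, (A.map Complex.ofReal).charpoly.IsRoot μ → μ.re < 0

/-- The Lyapunov function V(e, W̃) = eᵀ P e + γ⁻¹ tr((W̃ Λ^{1/2})ᵀ (W̃ Λ^{1/2})). -/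
def Vlyap {n N m : ℕ} (γ : ℝ) (P : Matrix (Fin n) (Fin n) ℝ)
    (Lhalf : Matrix (Fin m) (Fin m) ℝ) (e : Fin n → ℝ) (W : Matrix (Fin N) (Fin m) ℝ) : ℝ :=
  e ⬝ᵥ (P *ᵥ e) + γ⁻¹ * ((W * Lhalf)ᵀ * (W * Lhalf)).trace

/-- The augmented Lyapunov function V* of Theorem 5.1. -/
def Vstar {n N m : ℕ} (γ κ η ξ : ℝ) (P R : Matrix (Fin n) (Fin n) ℝ)
    (hP : P.IsHermitian) (hR : R.IsHermitian)
    (Lhalf : Matrix (Fin m) (Fin m) ℝ)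
    (e : Fin n → ℝ) (W : Matrix (Fin N) (Fin m) ℝ) (eL xt : Fin n → ℝ) : ℝ :=
  Vlyap γ P Lhalf e W + η⁻¹ * κ * (eL ⬝ᵥ (P *ᵥ eL))
    + 2 * ξ * κ⁻¹ * (lamMax hP)⁻¹ * lamMin hR * (xt ⬝ᵥ (P *ᵥ xt))

namespace Aux17

lemma dot_sym {n : ℕ} {P : Matrix (Fin n) (Fin n) ℝ} (hP : P.IsHermitian) (a b : Fin n → ℝ) :
    a ⬝ᵥ (P *ᵥ b) = b ⬝ᵥ (P *ᵥ a) := by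
  rw [dotProduct_mulVec, dotProduct_comm]
  congr 1
  rw [← mulVec_transpose, ← conjTranspose_eq_transpose_of_trivial, hP.eq]

lemma quad_decomp {n : ℕ} {P : Matrix (Fin n) (Fin n) ℝ} (hP : P.IsHermitian) (v : Fin n → ℝ) :
    ∃ w : Fin n → ℝ, v ⬝ᵥ (P *ᵥ v) = ∑ i, hP.eigenvalues i * (w i)^2 ∧ v ⬝ᵥ v = ∑ i, (w i)^2 := by
  set U : Matrix (Fin n) (Fin n) ℝ := (hP.eigenvectorUnitary : Matrix (Fin n) (Fin n) ℝ) with hU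
  refine ⟨star U *ᵥ v, ?_, ?_⟩
  · set w := star U *ᵥ v with hw
    have adj : ∀ z : Fin n → ℝ, v ⬝ᵥ (U *ᵥ z) = w ⬝ᵥ z := by
      intro z
      rw [dotProduct_mulVec, hw]
      congr 1
      rw [star_eq_conjTranspose, conjTranspose_eq_transpose_of_trivial, mulVec_transpose]
    conv_lhs => rw [hP.spectral_theorem, Unitary.conjStarAlgAut_apply]
    rw [← hU, ← mulVec_mulVec, ← mulVec_mulVec, adj, ← hw]
    simp [mulVec_diagonal, dotProduct, Function.comp]
    exact Finset.sum_congr rfl fun i _ => by ring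
  · set w := star U *ᵥ v with hw
    have adj : ∀ z : Fin n → ℝ, v ⬝ᵥ (U *ᵥ z) = w ⬝ᵥ z := by
      intro z
      rw [dotProduct_mulVec, hw]
      congr 1
      rw [star_eq_conjTranspose, conjTranspose_eq_transpose_of_trivial, mulVec_transpose]
    have h1 : U * star U = 1 := mem_unitaryGroup_iff.mp hP.eigenvectorUnitary.2
    have h2 : v ⬝ᵥ v = w ⬝ᵥ w := by
      have := adj w
      rwa [hw, mulVec_mulVec, h1, one_mulVec] at this
    rw [h2]
    simp [dotProduct, sq]

lemma lamMin_le_eig {n : ℕ} {A : Matrix (Fin n) (Fin n) ℝ} (hA : A.IsHermitian) (i : Fin n) :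
    lamMin hA ≤ hA.eigenvalues i :=
  ciInf_le (Set.Finite.bddBelow (Set.finite_range _)) i

lemma eig_le_lamMax {n : ℕ} {A : Matrix (Fin n) (Fin n) ℝ} (hA : A.IsHermitian) (i : Fin n) :
    hA.eigenvalues i ≤ lamMax hA :=
  le_ciSup (Set.Finite.bddAbove (Set.finite_range _)) i

lemma rayleigh_lower {n : ℕ} {P : Matrix (Fin n) (Fin n) ℝ} (hP : P.IsHermitian) (v : Fin n → ℝ) :
    lamMin hP * (v ⬝ᵥ v) ≤ v ⬝ᵥ (P *ᵥ v) := by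
  obtain ⟨w, h1, h2⟩ := quad_decomp hP v
  rw [h1, h2, Finset.mul_sum]
  exact Finset.sum_le_sum fun i _ => mul_le_mul_of_nonneg_right (lamMin_le_eig hP i) (sq_nonneg _)

lemma rayleigh_upper {n : ℕ} {P : Matrix (Fin n) (Fin n) ℝ} (hP : P.IsHermitian) (v : Fin n → ℝ) :
    v ⬝ᵥ (P *ᵥ v) ≤ lamMax hP * (v ⬝ᵥ v) := by
  obtain ⟨w, h1, h2⟩ := quad_decomp hP v
  rw [h1, h2, Finset.mul_sum]
  exact Finset.sum_le_sum fun i _ => mul_le_mul_of_nonneg_right (eig_le_lamMax hP i) (sq_nonneg _)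

lemma lamMin_pos {n : ℕ} (hn : 0 < n) {P : Matrix (Fin n) (Fin n) ℝ} (hP : P.PosDef) :
    0 < lamMin hP.1 := by
  have : Nonempty (Fin n) := ⟨⟨0, hn⟩⟩
  obtain ⟨i, hi⟩ := exists_eq_ciInf_of_finite (f := hP.1.eigenvalues)
  rw [lamMin, ← hi]
  exact hP.eigenvalues_pos i

lemma lamMax_pos {n : ℕ} (hn : 0 < n) {P : Matrix (Fin n) (Fin n) ℝ} (hP : P.PosDef) :
    0 < lamMax hP.1 := by
  have : Nonempty (Fin n) := ⟨⟨0, hn⟩⟩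
  obtain ⟨i, hi⟩ := exists_eq_ciSup_of_finite (f := hP.1.eigenvalues)
  rw [lamMax, ← hi]
  exact hP.eigenvalues_pos i

lemma dot_self_nonneg {n : ℕ} (v : Fin n → ℝ) : 0 ≤ v ⬝ᵥ v :=
  Finset.sum_nonneg fun i _ => mul_self_nonneg _

lemma quad_nonneg {n : ℕ} (hn : 0 < n) {P : Matrix (Fin n) (Fin n) ℝ} (hP : P.PosDef)
    (v : Fin n → ℝ) : 0 ≤ v ⬝ᵥ (P *ᵥ v) :=
  le_trans (mul_nonneg (le_of_lt (lamMin_pos hn hP)) (dot_self_nonneg v)) (rayleigh_lower hP.1 v)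

lemma quad_CS {n : ℕ} (hn : 0 < n) {P : Matrix (Fin n) (Fin n) ℝ} (hP : P.PosDef)
    (a b : Fin n → ℝ) :
    (a ⬝ᵥ (P *ᵥ b))^2 ≤ (a ⬝ᵥ (P *ᵥ a)) * (b ⬝ᵥ (P *ᵥ b)) := by
  by_cases hb : b ⬝ᵥ (P *ᵥ b) = 0
  · -- then b = 0 via rayleigh lower: lamMin * b⬝ᵥb ≤ 0 hence b⬝ᵥb = 0 hence b = 0
    have h1 := rayleigh_lower hP.1 b
    rw [hb] at h1
    have h2 : b ⬝ᵥ b ≤ 0 := by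
      nlinarith [lamMin_pos hn hP, dot_self_nonneg b]
    have h3 : b = 0 := by
      funext i
      by_contra h
      have : 0 < b ⬝ᵥ b := by
        have : 0 < b i * b i := mul_self_pos.mpr h
        have := Finset.sum_le_sum (f := fun _ : Fin n => (0:ℝ)) (g := fun j => b j * b j)
          (s := Finset.univ \ {i}) (fun j _ => mul_self_nonneg _)
        simp [dotProduct]
        calc (0:ℝ) < b i * b i := mul_self_pos.mpr h
        _ ≤ ∑ j, b j * b j := Finset.single_le_sum (f := fun j => b j * b j)
            (fun j _ => mul_self_nonneg _) (Finset.mem_univ i)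
      linarith
    simp [h3]
  · have hbpos : 0 < b ⬝ᵥ (P *ᵥ b) := lt_of_le_of_ne (quad_nonneg hn hP b) (Ne.symm hb)
    set A := a ⬝ᵥ (P *ᵥ a)
    set Bq := a ⬝ᵥ (P *ᵥ b)
    set C := b ⬝ᵥ (P *ᵥ b)
    have key : ∀ c : ℝ, 0 ≤ A + 2 * c * Bq + c^2 * C := by
      intro c
      have h := quad_nonneg hn hP (a + c • b)
      have expand : (a + c • b) ⬝ᵥ (P *ᵥ (a + c • b)) = A + 2 * c * Bq + c^2 * C := by
        rw [mulVec_add, mulVec_smul, dotProduct_add, add_dotProduct, add_dotProduct,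
          dotProduct_smul, smul_dotProduct, smul_dotProduct, dotProduct_smul]
        have := dot_sym hP.1 a b
        simp only [smul_eq_mul]
        rw [show b ⬝ᵥ (P *ᵥ a) = Bq from (dot_sym hP.1 b a).trans rfl]
        ring
      linarith [expand ▸ h]
    have h := key (-(Bq / C))
    have e1 : A + 2 * (-(Bq / C)) * Bq + (-(Bq / C))^2 * C = A - Bq^2/C := by
      field_simp; ring
    rw [e1] at h
    have e2 : Bq^2/C*C = Bq^2 := by field_simp
    nlinarith [mul_nonneg h hbpos.le]


lemma hasDerivAt_quad {n : ℕ} (P : Matrix (Fin n) (Fin n) ℝ) {u : ℝ → Fin n → ℝ}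
    {u' : Fin n → ℝ} {t : ℝ} (h : HasDerivAt u u' t) :
    HasDerivAt (fun s => u s ⬝ᵥ (P *ᵥ u s)) (u' ⬝ᵥ (P *ᵥ u t) + u t ⬝ᵥ (P *ᵥ u')) t := by
  have hi : ∀ i, HasDerivAt (fun s => u s i) (u' i) t := fun i => hasDerivAt_pi.mp h i
  have main : HasDerivAt (fun s => ∑ i, u s i * ∑ j, P i j * u s j)
      (∑ i, (u' i * ∑ j, P i j * u t j + u t i * ∑ j, P i j * u' j)) t := by
    refine HasDerivAt.fun_sum fun i _ => ?_
    exact (hi i).mul (HasDerivAt.fun_sum fun j _ => (hi j).const_mul (P i j))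
  convert main using 1
  · funext s; simp [dotProduct, mulVec]
  rw [Finset.sum_add_distrib]
  simp [dotProduct, mulVec]

lemma sqrt_dot_eq_norm {n : ℕ} (v : Fin n → ℝ) :
    Real.sqrt (v ⬝ᵥ v) = ‖(WithLp.equiv 2 (Fin n → ℝ)).symm v‖ := by
  rw [EuclideanSpace.norm_eq]
  congr 1
  simp [dotProduct, sq, Real.norm_eq_abs, ← abs_mul_abs_self]

lemma normInf_le_sqrt_dot {n : ℕ} (v : Fin n → ℝ) : ‖v‖ ≤ Real.sqrt (v ⬝ᵥ v) := by
  rcases Nat.eq_zero_or_pos n with h | h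
  · subst h
    simp [Subsingleton.elim v 0]
  · rw [pi_norm_le_iff_of_nonneg (Real.sqrt_nonneg _)]
    intro i
    rw [Real.norm_eq_abs, ← Real.sqrt_sq_eq_abs]
    apply Real.sqrt_le_sqrt
    have h3 : v i * v i ≤ ∑ j, v j * v j := by
      simpa using Finset.single_le_sum (f := fun j => v j * v j)
        (fun j _ => mul_self_nonneg (v j)) (Finset.mem_univ i)
    simp only [dotProduct]
    nlinarith [h3]

lemma sqrt_dot_add_le {n : ℕ} (u v : Fin n → ℝ) :
    Real.sqrt ((u + v) ⬝ᵥ (u + v)) ≤ Real.sqrt (u ⬝ᵥ u) + Real.sqrt (v ⬝ᵥ v) := by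
  rw [sqrt_dot_eq_norm, sqrt_dot_eq_norm, sqrt_dot_eq_norm, WithLp.equiv_symm_apply, WithLp.toLp_add]
  exact norm_add_le _ _

lemma young_aux {d u w c : ℝ} (hu : 0 ≤ u) (hw : 0 ≤ w) (hcs : d^2 ≤ u*w) :
    2*c*d ≤ 2*u + c^2/2*w := by
  have h1 : 0 ≤ c^2 * (u*w - d^2) := mul_nonneg (sq_nonneg c) (by linarith)
  have hA : 0 ≤ 2*u + c^2/2*w := by positivity
  have h2 : (2*c*d)^2 ≤ (2*u + c^2/2*w)^2 := by
    nlinarith [sq_nonneg (2*u - c^2/2*w), h1]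
  nlinarith [h2, hA]

lemma bound_of_deriv {f D : ℝ → ℝ} {α β M : ℝ} (hα : 0 < α)
    (hd : ∀ t ≥ (0:ℝ), HasDerivAt f (D t) t) (hD : ∀ t ≥ (0:ℝ), D t ≤ -α * f t + β)
    (hM0 : f 0 ≤ M) (hMβ : β / α ≤ M) : ∀ t ≥ (0:ℝ), f t ≤ M := by
  intro t ht
  have cont : ContinuousOn f (Set.Icc 0 t) := fun x hx =>
    ((hd x hx.1).continuousAt).continuousWithinAt
  have key := le_gronwallBound_of_liminf_deriv_right_le (f' := D) (δ := f 0) (K := -α)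
    (ε := β) (a := 0) (b := t) cont
    (fun x hx r hr => ((hd x hx.1).hasDerivWithinAt.liminf_right_slope_le hr))
    le_rfl (fun x hx => hD x hx.1) t (Set.mem_Icc.mpr ⟨ht, le_rfl⟩)
  rw [gronwallBound_of_K_ne_0 (by linarith : (-α) ≠ 0)] at key
  beta_reduce at key
  set s := Real.exp (-α * (t - 0)) with hs
  have hs1 : s ≤ 1 := Real.exp_le_one_iff.mpr (by nlinarith)
  have hs0 : 0 < s := Real.exp_pos _
  have e1 : β / (-α) * (s - 1) = (β / α) * (1 - s) := by
    rw [div_neg]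
    ring
  rw [e1] at key
  nlinarith [mul_le_mul_of_nonneg_right hM0 hs0.le,
    mul_le_mul_of_nonneg_right hMβ (by linarith : (0:ℝ) ≤ 1 - s)]

end Aux17

open Aux17

set_option maxHeartbeats 1000000 in
theorem statement17
    {n N m : ℕ} (hn : 0 < n) (hN : 0 < N) (hm : 0 < m)
    (Ar : Matrix (Fin n) (Fin n) ℝ) (B : Matrix (Fin n) (Fin m) ℝ)
    (Lam Lhalf : Matrix (Fin m) (Fin m) ℝ) (R P : Matrix (Fin n) (Fin n) ℝ)
    (hAr : Hurwitz Ar)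
    (hLam : Lam.PosDef) (hLamDiag : Lam.IsDiag)
    (hLhalfDiag : Lhalf.IsDiag) (hLhalfSq : Lhalf * Lhalf = Lam)
    (hR : R.PosDef) (hP : P.PosDef)
    (hLyap : Arᵀ * P + P * Ar + R = 0)
    (γ κ η ξ : ℝ) (hγ : 0 < γ) (hκ : 0 < κ) (hη : 0 < η) (hξ0 : 0 < ξ) (hξ1 : ξ < 1)
    (σx : ℝ → Fin N → ℝ)
    (W Wdot Wt U : ℝ → Matrix (Fin N) (Fin m) ℝ)
    (wdotmax wtilmax : ℝ)
    (hWder : ∀ t ≥ (0:ℝ), ∀ i j, HasDerivAt (fun s => W s i j) (Wdot t i j) t)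
    (hWdotbnd : ∀ t ≥ (0:ℝ), normF (Wdot t) ≤ wdotmax)
    (hWtbnd : ∀ t ≥ (0:ℝ), normF (Wt t) ≤ wtilmax)
    (e eL xt : ℝ → Fin n → ℝ)
    (heL0 : eL 0 = 0) (hxt0 : xt 0 = 0)
    (he : ∀ t ≥ (0:ℝ), HasDerivAt e
          (Ar *ᵥ e t - (B * Lam * (Wt t)ᵀ) *ᵥ σx t - κ • (e t - eL t)) t)
    (heL : ∀ t ≥ (0:ℝ), HasDerivAt eL (Ar *ᵥ eL t + η • (e t - eL t)) t)
    (hxt : ∀ t ≥ (0:ℝ), HasDerivAt xt (Ar *ᵥ xt t + κ • (e t - eL t)) t)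
    (hWt : ∀ t ≥ (0:ℝ), ∀ i j, HasDerivAt (fun s => Wt s i j)
          (γ * U t i j - Wdot t i j) t)
    (hUproj : ∀ t ≥ (0:ℝ),
      ((Lam * (Wt t)ᵀ) * (U t - vecMulVec (σx t) ((e t) ᵥ* (P * B)))).trace ≤ 0)
    : ∀ t ≥ (0:ℝ),
      normInf (e t + xt t)
        ≤ Real.sqrt
            ((max (Vstar γ κ η ξ P R hP.1 hR.1 Lhalf (e 0) (Wt 0) 0 0)
                (γ⁻¹ * normF Lam * wtilmax ^ 2
                  + (2 * γ⁻¹ * normF Lam * wtilmax * wdotmax) * lamMax hP.1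
                    / ((1 - ξ) * lamMin hR.1)))
              / lamMin hP.1)
          * (1 + Real.sqrt (κ * lamMax hP.1 / (2 * ξ * lamMin hR.1))) := by
  -- basic positivity
  have hp : 0 < lamMin hP.1 := lamMin_pos hn hP
  have hPM : 0 < lamMax hP.1 := lamMax_pos hn hP
  have hr : 0 < lamMin hR.1 := lamMin_pos hn hR
  set cxi : ℝ := 2 * ξ * κ⁻¹ * (lamMax hP.1)⁻¹ * lamMin hR.1 with hcxi
  have hcxipos : 0 < cxi :=
    mul_pos (mul_pos (mul_pos (mul_pos two_pos hξ0) (inv_pos.mpr hκ)) (inv_pos.mpr hPM)) hr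
  have hγ' : γ ≠ 0 := hγ.ne'
  have hwt0 : 0 ≤ wtilmax := le_trans (Real.sqrt_nonneg _) (hWtbnd 0 le_rfl)
  have hwd0 : 0 ≤ wdotmax := le_trans (Real.sqrt_nonneg _) (hWdotbnd 0 le_rfl)
  have hLF0 : 0 ≤ normF Lam := Real.sqrt_nonneg _
  have hPsymT : Pᵀ = P := by
    rw [← conjTranspose_eq_transpose_of_trivial]; exact hP.1
  -- diagonal entries of Lam
  have hLamjj : ∀ j, 0 < Lam j j := by
    intro j
    have hne : (Pi.single j 1 : Fin m → ℝ) ≠ 0 := by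
      intro hcontra
      have h1 := congrFun hcontra j
      simp [Pi.single_apply] at h1
    have h := hLam.dotProduct_mulVec_pos hne
    have hs : star (Pi.single j 1 : Fin m → ℝ) = Pi.single j 1 := by
      simp
    rw [hs] at h
    simpa [dotProduct, mulVec, Pi.single_apply] using h
  have hLamle : ∀ j, Lam j j ≤ normF Lam := by
    intro j
    have h1 : Lam j j ^ 2 ≤ ∑ a, ∑ b, Lam a b ^ 2 := by
      calc Lam j j ^2 ≤ ∑ b, Lam j b ^2 := Finset.single_le_sum
            (f := fun b => Lam j b ^2) (fun b _ => sq_nonneg _) (Finset.mem_univ j)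
      _ ≤ ∑ a, ∑ b, Lam a b ^2 := Finset.single_le_sum (f := fun a => ∑ b, Lam a b^2)
            (fun a _ => Finset.sum_nonneg fun b _ => sq_nonneg _) (Finset.mem_univ j)
    calc Lam j j ≤ |Lam j j| := le_abs_self _
    _ = Real.sqrt (Lam j j^2) := (Real.sqrt_sq_eq_abs _).symm
    _ ≤ Real.sqrt (∑ a, ∑ b, Lam a b^2) := Real.sqrt_le_sqrt h1
    _ = normF Lam := rfl
  have hnormFsq : ∀ (Wm : Matrix (Fin N) (Fin m) ℝ) (c : ℝ), normF Wm ≤ c →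
      ∑ i, ∑ j, Wm i j ^ 2 ≤ c ^ 2 := by
    intro Wm c hc
    simp only [normF] at hc
    have h2 : (0:ℝ) ≤ ∑ i, ∑ j, Wm i j ^ 2 := by positivity
    nlinarith [Real.sq_sqrt h2, Real.sqrt_nonneg (∑ i, ∑ j, Wm i j ^ 2)]
  -- the T function and f function
  set T : ℝ → ℝ := fun s => ∑ i, ∑ j, Lam j j * (Wt s i j * Wt s i j) with hTdef
  set f : ℝ → ℝ := fun s => e s ⬝ᵥ (P *ᵥ e s) + γ⁻¹ * T s
      + η⁻¹ * κ * (eL s ⬝ᵥ (P *ᵥ eL s)) + cxi * (xt s ⬝ᵥ (P *ᵥ xt s)) with hfdef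
  have htrace : ∀ Wm : Matrix (Fin N) (Fin m) ℝ,
      ((Wm * Lhalf)ᵀ * (Wm * Lhalf)).trace = ∑ i, ∑ j, Lam j j * (Wm i j * Wm i j) := by
    intro Wm
    have hent : ∀ i j, (Wm * Lhalf) i j = Wm i j * Lhalf j j := by
      intro i j
      rw [Matrix.mul_apply]
      rw [Finset.sum_eq_single j]
      · intro k _ hk
        rw [hLhalfDiag hk, mul_zero]
      · intro hj; exact absurd (Finset.mem_univ j) hj
    have hsq : ∀ j, Lhalf j j * Lhalf j j = Lam j j := by
      intro j
      have h := congrFun (congrFun hLhalfSq j) j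
      rw [Matrix.mul_apply, Finset.sum_eq_single j] at h
      · exact h
      · intro k _ hk
        rw [hLhalfDiag (Ne.symm hk), zero_mul]
      · intro hj; exact absurd (Finset.mem_univ j) hj
    rw [Matrix.trace]
    simp only [Matrix.diag_apply, Matrix.mul_apply, Matrix.transpose_apply, hent]
    rw [Finset.sum_comm]
    refine Finset.sum_congr rfl fun i _ => Finset.sum_congr rfl fun j _ => ?_
    rw [← hsq j]; ring
  have hT0 : ∀ s, 0 ≤ T s := by
    intro s
    exact Finset.sum_nonneg fun i _ => Finset.sum_nonneg fun j _ =>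
      mul_nonneg (hLamjj j).le (mul_self_nonneg _)
  have hTbound : ∀ s ≥ (0:ℝ), T s ≤ normF Lam * wtilmax^2 := by
    intro s hs
    have hW2 : ∑ i, ∑ j, Wt s i j * Wt s i j ≤ wtilmax^2 := by
      have h3 : Real.sqrt (∑ i, ∑ j, Wt s i j ^2) ≤ wtilmax := hWtbnd s hs
      have h2 : (0:ℝ) ≤ ∑ i, ∑ j, Wt s i j ^2 := by positivity
      have h4 : ∑ i, ∑ j, Wt s i j^2 ≤ wtilmax^2 := by
        nlinarith [Real.sq_sqrt h2, Real.sqrt_nonneg (∑ i, ∑ j, Wt s i j ^2)]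
      calc ∑ i, ∑ j, Wt s i j * Wt s i j = ∑ i, ∑ j, Wt s i j^2 :=
            Finset.sum_congr rfl fun i _ => Finset.sum_congr rfl fun j _ => by ring
      _ ≤ wtilmax^2 := h4
    calc T s = ∑ i, ∑ j, Lam j j * (Wt s i j * Wt s i j) := by rw [hTdef]
    _ ≤ ∑ i, ∑ j, normF Lam * (Wt s i j * Wt s i j) :=
        Finset.sum_le_sum fun i _ => Finset.sum_le_sum fun j _ =>
          mul_le_mul_of_nonneg_right (hLamle j) (mul_self_nonneg _)
    _ = normF Lam * ∑ i, ∑ j, (Wt s i j * Wt s i j) := by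
        rw [Finset.mul_sum]
        exact Finset.sum_congr rfl fun i _ => (Finset.mul_sum _ _ _).symm
    _ ≤ normF Lam * wtilmax^2 := mul_le_mul_of_nonneg_left hW2 hLF0
  -- derivative of f
  set DT : ℝ → ℝ := fun t => ∑ i, ∑ j, Lam j j *
      ((γ * U t i j - Wdot t i j) * Wt t i j + Wt t i j * (γ * U t i j - Wdot t i j)) with hDTdef
  set D : ℝ → ℝ := fun t =>
    ((Ar *ᵥ e t - (B * Lam * (Wt t)ᵀ) *ᵥ σx t - κ • (e t - eL t)) ⬝ᵥ (P *ᵥ e t)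
      + e t ⬝ᵥ (P *ᵥ (Ar *ᵥ e t - (B * Lam * (Wt t)ᵀ) *ᵥ σx t - κ • (e t - eL t))))
    + γ⁻¹ * DT t
    + η⁻¹ * κ * ((Ar *ᵥ eL t + η • (e t - eL t)) ⬝ᵥ (P *ᵥ eL t)
      + eL t ⬝ᵥ (P *ᵥ (Ar *ᵥ eL t + η • (e t - eL t))))
    + cxi * ((Ar *ᵥ xt t + κ • (e t - eL t)) ⬝ᵥ (P *ᵥ xt t)
      + xt t ⬝ᵥ (P *ᵥ (Ar *ᵥ xt t + κ • (e t - eL t)))) with hDdef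
  have hdf : ∀ t ≥ (0:ℝ), HasDerivAt f (D t) t := by
    intro t ht
    have h2 : HasDerivAt T (DT t) t := by
      refine HasDerivAt.fun_sum fun i _ => HasDerivAt.fun_sum fun j _ => ?_
      exact ((hWt t ht i j).mul (hWt t ht i j)).const_mul (Lam j j)
    exact ((((hasDerivAt_quad P (he t ht)).add (h2.const_mul γ⁻¹)).add
      ((hasDerivAt_quad P (heL t ht)).const_mul (η⁻¹ * κ))).add
      ((hasDerivAt_quad P (hxt t ht)).const_mul cxi))
  -- Lyapunov quadratic identity
  have hLyapQ : ∀ v : Fin n → ℝ,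
      (Ar *ᵥ v) ⬝ᵥ (P *ᵥ v) + v ⬝ᵥ (P *ᵥ (Ar *ᵥ v)) = -(v ⬝ᵥ (R *ᵥ v)) := by
    intro v
    have h1 : (Ar *ᵥ v) ⬝ᵥ (P *ᵥ v) = v ⬝ᵥ ((Arᵀ * P) *ᵥ v) := by
      rw [dotProduct_comm, dotProduct_mulVec, ← mulVec_mulVec, mulVec_transpose,
        dotProduct_comm]
    have h2 : v ⬝ᵥ (P *ᵥ (Ar *ᵥ v)) = v ⬝ᵥ ((P * Ar) *ᵥ v) := by rw [mulVec_mulVec]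
    have h3 : Arᵀ * P + P * Ar = -R := eq_neg_of_add_eq_zero_left hLyap
    rw [h1, h2, ← dotProduct_add, ← add_mulVec, h3, neg_mulVec, dotProduct_neg]
  -- projection inequality in usable form
  have hprojsum : ∀ t ≥ (0:ℝ),
      ∑ j, ∑ i, Lam j j * (Wt t i j * U t i j)
        ≤ ((B * Lam * (Wt t)ᵀ) *ᵥ σx t) ⬝ᵥ (P *ᵥ e t) := by
    intro t ht
    have h0 := hUproj t ht
    rw [Matrix.mul_sub, Matrix.trace_sub, sub_nonpos] at h0
    have hcol : ∀ (j : Fin m) (k : Fin N), (∑ l, Lam j l * Wt t k l) = Lam j j * Wt t k j := by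
      intro j k
      rw [Finset.sum_eq_single j]
      · intro l _ hl
        rw [hLamDiag (Ne.symm hl), zero_mul]
      · intro hj; exact absurd (Finset.mem_univ j) hj
    have htr1 : ((Lam * (Wt t)ᵀ) * U t).trace = ∑ j, ∑ i, Lam j j * (Wt t i j * U t i j) := by
      rw [Matrix.trace]
      simp only [Matrix.diag_apply, Matrix.mul_apply, Matrix.transpose_apply, hcol]
      exact Finset.sum_congr rfl fun j _ => Finset.sum_congr rfl fun i _ => by ring
    have htr2 : ((Lam * (Wt t)ᵀ) * vecMulVec (σx t) ((e t) ᵥ* (P * B))).trace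
        = ((B * Lam * (Wt t)ᵀ) *ᵥ σx t) ⬝ᵥ (P *ᵥ e t) := by
      rw [vecMulVec_eq Unit, trace_mul_comm, Matrix.mul_assoc, ← replicateRow_vecMul,
        trace_replicateCol_mul_replicateRow]
      have hPE : P *ᵥ e t = e t ᵥ* P := by
        have h := mulVec_transpose P (e t)
        rwa [hPsymT] at h
      conv_lhs => rw [vecMul_vecMul]
      conv_rhs => rw [dotProduct_comm, dotProduct_mulVec, dotProduct_comm, hPE,
        vecMul_vecMul]
      congr 1
      congr 1
      simp only [Matrix.mul_assoc]
    rw [htr1, htr2] at h0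
    exact h0
  -- bound on the disturbance trace term
  have hA2 : ∀ t ≥ (0:ℝ),
      -(normF Lam * wtilmax * wdotmax) ≤ ∑ j, ∑ i, (Lam j j * Wt t i j) * Wdot t i j := by
    intro t ht
    set S2 := ∑ j, ∑ i, (Lam j j * Wt t i j) * Wdot t i j with hS2def
    have hprod : S2 = ∑ p : Fin m × Fin N, (Lam p.1 p.1 * Wt t p.2 p.1) * Wdot t p.2 p.1 := by
      rw [hS2def, Fintype.sum_prod_type]
    have hCS := Finset.sum_mul_sq_le_sq_mul_sq Finset.univ
      (fun p : Fin m × Fin N => Lam p.1 p.1 * Wt t p.2 p.1) (fun p => Wdot t p.2 p.1)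
    have hWd2 : ∑ p : Fin m × Fin N, (Wdot t p.2 p.1) ^ 2 ≤ wdotmax ^ 2 := by
      rw [Fintype.sum_prod_type, Finset.sum_comm]
      exact hnormFsq (Wdot t) wdotmax (hWdotbnd t ht)
    have hWt2 : ∑ p : Fin m × Fin N, (Wt t p.2 p.1) ^ 2 ≤ wtilmax ^ 2 := by
      rw [Fintype.sum_prod_type, Finset.sum_comm]
      exact hnormFsq (Wt t) wtilmax (hWtbnd t ht)
    have hLW : ∑ p : Fin m × Fin N, (Lam p.1 p.1 * Wt t p.2 p.1) ^ 2
        ≤ normF Lam ^ 2 * wtilmax ^ 2 := by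
      have h1 : ∀ p : Fin m × Fin N, (Lam p.1 p.1 * Wt t p.2 p.1) ^ 2
          ≤ normF Lam ^ 2 * (Wt t p.2 p.1) ^ 2 := by
        intro p
        have h2 : Lam p.1 p.1 ^ 2 ≤ normF Lam ^ 2 :=
          pow_le_pow_left₀ (hLamjj p.1).le (hLamle p.1) 2
        nlinarith [sq_nonneg (Wt t p.2 p.1)]
      calc ∑ p : Fin m × Fin N, (Lam p.1 p.1 * Wt t p.2 p.1) ^ 2
          ≤ ∑ p : Fin m × Fin N, normF Lam ^ 2 * (Wt t p.2 p.1) ^ 2 :=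
            Finset.sum_le_sum fun p _ => h1 p
      _ = normF Lam ^ 2 * ∑ p : Fin m × Fin N, (Wt t p.2 p.1) ^ 2 := by
            rw [Finset.mul_sum]
      _ ≤ normF Lam ^ 2 * wtilmax ^ 2 :=
            mul_le_mul_of_nonneg_left hWt2 (by positivity)
    have hB0 : (0:ℝ) ≤ ∑ p : Fin m × Fin N, (Wdot t p.2 p.1) ^ 2 := by positivity
    have hA0 : (0:ℝ) ≤ normF Lam ^ 2 * wtilmax ^ 2 := by positivity
    have hS2sq : S2 ^ 2 ≤ (normF Lam * wtilmax * wdotmax) ^ 2 := by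
      rw [hprod]
      calc (∑ p : Fin m × Fin N, (Lam p.1 p.1 * Wt t p.2 p.1) * Wdot t p.2 p.1) ^ 2
          ≤ (∑ p : Fin m × Fin N, (Lam p.1 p.1 * Wt t p.2 p.1) ^ 2)
            * ∑ p : Fin m × Fin N, (Wdot t p.2 p.1) ^ 2 := hCS
      _ ≤ (normF Lam ^ 2 * wtilmax ^ 2) * wdotmax ^ 2 := by
            apply mul_le_mul hLW hWd2 hB0 hA0
      _ = (normF Lam * wtilmax * wdotmax) ^ 2 := by ring
    have hc0 : (0:ℝ) ≤ normF Lam * wtilmax * wdotmax := by positivity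
    nlinarith [sq_nonneg (S2 + normF Lam * wtilmax * wdotmax)]
  -- DT decomposition
  have hDTeq : ∀ t, γ⁻¹ * DT t = 2 * (∑ j, ∑ i, Lam j j * (Wt t i j * U t i j))
      - 2 * γ⁻¹ * (∑ j, ∑ i, (Lam j j * Wt t i j) * Wdot t i j) := by
    intro t
    simp only [hDTdef]
    rw [show (∑ j, ∑ i, Lam j j * (Wt t i j * U t i j))
          = ∑ i, ∑ j, Lam j j * (Wt t i j * U t i j) from Finset.sum_comm,
      show (∑ j, ∑ i, (Lam j j * Wt t i j) * Wdot t i j)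
          = ∑ i, ∑ j, (Lam j j * Wt t i j) * Wdot t i j from Finset.sum_comm,
      Finset.mul_sum, Finset.mul_sum, Finset.mul_sum, ← Finset.sum_sub_distrib]
    refine Finset.sum_congr rfl fun i _ => ?_
    rw [Finset.mul_sum, Finset.mul_sum, Finset.mul_sum, ← Finset.sum_sub_distrib]
    refine Finset.sum_congr rfl fun j _ => ?_
    field_simp
    ring
  -- Rayleigh-type comparison between R and P quadratic forms
  have hRP : ∀ v : Fin n → ℝ,
      (lamMin hR.1 / lamMax hP.1) * (v ⬝ᵥ (P *ᵥ v)) ≤ v ⬝ᵥ (R *ᵥ v) := by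
    intro v
    have h1 := rayleigh_lower hR.1 v
    have h2 := rayleigh_upper hP.1 v
    rw [div_mul_eq_mul_div, div_le_iff₀ hPM]
    nlinarith [mul_le_mul_of_nonneg_left h2 hr.le, mul_le_mul_of_nonneg_left h1 hPM.le]
  -- constants for the Gronwall argument
  set α : ℝ := (1 - ξ) * lamMin hR.1 / lamMax hP.1 with hαdef
  have hαpos : 0 < α := by
    rw [hαdef]
    exact div_pos (mul_pos (by linarith) hr) hPM
  set β : ℝ := α * (γ⁻¹ * normF Lam * wtilmax^2) + 2 * γ⁻¹ * normF Lam * wtilmax * wdotmax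
    with hβdef
  -- the key derivative bound
  have hαle : α ≤ lamMin hR.1 / lamMax hP.1 := by
    rw [hαdef, div_le_div_iff₀ hPM hPM]
    nlinarith [mul_nonneg (mul_nonneg hξ0.le hr.le) hPM.le]
  have hsumeq : α + cxi * κ / 2 = lamMin hR.1 / lamMax hP.1 := by
    rw [hαdef, hcxi]
    field_simp
    ring
  have hDbound : ∀ t ≥ (0:ℝ), D t ≤ -α * f t + β := by
    intro t ht
    have hexp : D t =
        -(e t ⬝ᵥ (R *ᵥ e t)) - 2*(((B * Lam * (Wt t)ᵀ) *ᵥ σx t) ⬝ᵥ (P *ᵥ e t))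
        - 2*κ*(e t ⬝ᵥ (P *ᵥ e t)) + 2*κ*(e t ⬝ᵥ (P *ᵥ eL t)) + 2*κ*(eL t ⬝ᵥ (P *ᵥ e t))
        - 2*κ*(eL t ⬝ᵥ (P *ᵥ eL t))
        + γ⁻¹ * DT t
        - η⁻¹*κ*(eL t ⬝ᵥ (R *ᵥ eL t))
        - cxi*(xt t ⬝ᵥ (R *ᵥ xt t)) + 2*cxi*κ*(e t ⬝ᵥ (P *ᵥ xt t))
        - 2*cxi*κ*(eL t ⬝ᵥ (P *ᵥ xt t)) := by
      simp only [hDdef]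
      simp only [mulVec_sub, mulVec_add, mulVec_smul, sub_dotProduct, dotProduct_sub,
        add_dotProduct, dotProduct_add, smul_dotProduct, dotProduct_smul, smul_eq_mul]
      linear_combination hLyapQ (e t) + (η⁻¹*κ) * hLyapQ (eL t) + cxi * hLyapQ (xt t)
        + (-1) * dot_sym hP.1 (e t) ((B * Lam * (Wt t)ᵀ) *ᵥ σx t)
        + (κ*((e t ⬝ᵥ (P *ᵥ eL t)) + (eL t ⬝ᵥ (P *ᵥ e t)) - 2*(eL t ⬝ᵥ (P *ᵥ eL t))))
            * (inv_mul_cancel₀ hη.ne')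
        + (cxi*κ) * dot_sym hP.1 (xt t) (e t)
        + (-(cxi*κ)) * dot_sym hP.1 (xt t) (eL t)
    -- Young's inequality for the cross term
    have hY0 : 2*cxi*((e t - eL t) ⬝ᵥ (P *ᵥ xt t))
        ≤ 2*((e t - eL t) ⬝ᵥ (P *ᵥ (e t - eL t))) + cxi^2/2*(xt t ⬝ᵥ (P *ᵥ xt t)) :=
      young_aux (quad_nonneg hn hP _) (quad_nonneg hn hP _) (quad_CS hn hP _ _)
    have hY1 : κ*(2*cxi*((e t - eL t) ⬝ᵥ (P *ᵥ xt t)))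
        ≤ κ*(2*((e t - eL t) ⬝ᵥ (P *ᵥ (e t - eL t))) + cxi^2/2*(xt t ⬝ᵥ (P *ᵥ xt t))) :=
      mul_le_mul_of_nonneg_left hY0 hκ.le
    have hYoungAtoms : 2*cxi*κ*(e t ⬝ᵥ (P *ᵥ xt t)) - 2*cxi*κ*(eL t ⬝ᵥ (P *ᵥ xt t))
        ≤ 2*κ*(e t ⬝ᵥ (P *ᵥ e t)) - 2*κ*(e t ⬝ᵥ (P *ᵥ eL t)) - 2*κ*(eL t ⬝ᵥ (P *ᵥ e t))
          + 2*κ*(eL t ⬝ᵥ (P *ᵥ eL t)) + (cxi^2*κ/2)*(xt t ⬝ᵥ (P *ᵥ xt t)) := by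
      simp only [mulVec_sub, sub_dotProduct, dotProduct_sub] at hY1
      linarith [hY1]
    -- scaled ingredients
    have hproj2 := hprojsum t ht
    have hDT2 := hDTeq t
    have hA2s : 2*γ⁻¹*(-(normF Lam * wtilmax * wdotmax))
        ≤ 2*γ⁻¹*(∑ j, ∑ i, (Lam j j * Wt t i j) * Wdot t i j) :=
      mul_le_mul_of_nonneg_left (hA2 t ht) (by positivity)
    have hTs : (α*γ⁻¹)*(T t) ≤ (α*γ⁻¹)*(normF Lam * wtilmax^2) :=
      mul_le_mul_of_nonneg_left (hTbound t ht) (mul_nonneg hαpos.le (by positivity))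
    have hRE : α*(e t ⬝ᵥ (P *ᵥ e t)) ≤ e t ⬝ᵥ (R *ᵥ e t) :=
      le_trans (mul_le_mul_of_nonneg_right hαle (quad_nonneg hn hP _)) (hRP (e t))
    have hRL : α*(eL t ⬝ᵥ (P *ᵥ eL t)) ≤ eL t ⬝ᵥ (R *ᵥ eL t) :=
      le_trans (mul_le_mul_of_nonneg_right hαle (quad_nonneg hn hP _)) (hRP (eL t))
    have hRLs : (η⁻¹*κ)*(α*(eL t ⬝ᵥ (P *ᵥ eL t))) ≤ (η⁻¹*κ)*(eL t ⬝ᵥ (R *ᵥ eL t)) :=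
      mul_le_mul_of_nonneg_left hRL (by positivity)
    have hRX : (α + cxi*κ/2)*(xt t ⬝ᵥ (P *ᵥ xt t)) ≤ xt t ⬝ᵥ (R *ᵥ xt t) := by
      rw [hsumeq]
      exact hRP (xt t)
    have hRXs : cxi*((α + cxi*κ/2)*(xt t ⬝ᵥ (P *ᵥ xt t))) ≤ cxi*(xt t ⬝ᵥ (R *ᵥ xt t)) :=
      mul_le_mul_of_nonneg_left hRX hcxipos.le
    rw [hexp, hβdef]
    simp only [hfdef]
    linarith [hproj2, hDT2, hA2s, hTs, hRE, hRLs, hRXs, hYoungAtoms]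
  -- Gronwall conclusion
  set M : ℝ := max (Vstar γ κ η ξ P R hP.1 hR.1 Lhalf (e 0) (Wt 0) 0 0)
      (γ⁻¹ * normF Lam * wtilmax ^ 2
        + (2 * γ⁻¹ * normF Lam * wtilmax * wdotmax) * lamMax hP.1
          / ((1 - ξ) * lamMin hR.1)) with hMdef
  have hf0 : f 0 = Vstar γ κ η ξ P R hP.1 hR.1 Lhalf (e 0) (Wt 0) 0 0 := by
    rw [hfdef]
    simp only [Vstar, Vlyap, htrace (Wt 0), heL0, hxt0, hTdef]
    rfl
  have hM0 : f 0 ≤ M := by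
    rw [hf0, hMdef]; exact le_max_left _ _
  have hMβ : β / α ≤ M := by
    have h1 : (1:ℝ) - ξ ≠ 0 := by linarith
    have h2 : lamMin hR.1 ≠ 0 := hr.ne'
    have h3 : lamMax hP.1 ≠ 0 := hPM.ne'
    have heq : β / α = γ⁻¹ * normF Lam * wtilmax ^ 2
        + (2 * γ⁻¹ * normF Lam * wtilmax * wdotmax) * lamMax hP.1
          / ((1 - ξ) * lamMin hR.1) := by
      rw [hβdef, hαdef]
      field_simp
    rw [heq, hMdef]
    exact le_max_right _ _
  have hfM : ∀ t ≥ (0:ℝ), f t ≤ M := bound_of_deriv hαpos hdf hDbound hM0 hMβ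
  have hMnn : 0 ≤ M := by
    have h0 : 0 ≤ f 0 := by
      rw [hfdef]
      have q1 := quad_nonneg hn hP (e 0)
      have q2 := mul_nonneg (inv_nonneg.mpr hγ.le) (hT0 0)
      have q3 := mul_nonneg (mul_nonneg (inv_nonneg.mpr hη.le) hκ.le) (quad_nonneg hn hP (eL 0))
      have q4 := mul_nonneg hcxipos.le (quad_nonneg hn hP (xt 0))
      linarith
    linarith [hM0]
  -- extract the final bounds
  intro t ht
  have hft : f t ≤ M := hfM t ht
  simp only [hfdef] at hft
  have hq1 : 0 ≤ e t ⬝ᵥ (P *ᵥ e t) := quad_nonneg hn hP (e t)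
  have hq2 : 0 ≤ γ⁻¹ * T t := mul_nonneg (inv_nonneg.mpr hγ.le) (hT0 t)
  have hq3 : 0 ≤ η⁻¹ * κ * (eL t ⬝ᵥ (P *ᵥ eL t)) :=
    mul_nonneg (mul_nonneg (inv_nonneg.mpr hη.le) hκ.le) (quad_nonneg hn hP (eL t))
  have hq4 : 0 ≤ xt t ⬝ᵥ (P *ᵥ xt t) := quad_nonneg hn hP (xt t)
  have hEb : e t ⬝ᵥ (P *ᵥ e t) ≤ M := by
    linarith [mul_nonneg hcxipos.le hq4]
  have hXb : cxi * (xt t ⬝ᵥ (P *ᵥ xt t)) ≤ M := by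
    linarith
  have hE2 : e t ⬝ᵥ e t ≤ M / lamMin hP.1 := by
    have h5 := rayleigh_lower hP.1 (e t)
    rw [le_div_iff₀ hp]
    linarith
  have hX2 : xt t ⬝ᵥ xt t ≤ (M / lamMin hP.1) * (κ * lamMax hP.1 / (2*ξ*lamMin hR.1)) := by
    have h5 := rayleigh_lower hP.1 (xt t)
    have h7 : (M / lamMin hP.1) * (κ * lamMax hP.1 / (2*ξ*lamMin hR.1))
        = M / (lamMin hP.1 * cxi) := by
      rw [hcxi]
      field_simp
    rw [h7, le_div_iff₀ (mul_pos hp hcxipos)]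
    linarith [mul_le_mul_of_nonneg_left h5 hcxipos.le, hXb]
  have hnormE : Real.sqrt (e t ⬝ᵥ e t) ≤ Real.sqrt (M / lamMin hP.1) := Real.sqrt_le_sqrt hE2
  have hnormX : Real.sqrt (xt t ⬝ᵥ xt t)
      ≤ Real.sqrt (M / lamMin hP.1) * Real.sqrt (κ * lamMax hP.1 / (2*ξ*lamMin hR.1)) := by
    rw [← Real.sqrt_mul (div_nonneg hMnn hp.le)]
    exact Real.sqrt_le_sqrt hX2
  calc normInf (e t + xt t) ≤ Real.sqrt ((e t + xt t) ⬝ᵥ (e t + xt t)) :=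
        normInf_le_sqrt_dot _
  _ ≤ Real.sqrt (e t ⬝ᵥ e t) + Real.sqrt (xt t ⬝ᵥ xt t) := sqrt_dot_add_le _ _
  _ ≤ Real.sqrt (M / lamMin hP.1)
      + Real.sqrt (M / lamMin hP.1) * Real.sqrt (κ * lamMax hP.1 / (2*ξ*lamMin hR.1)) :=
        add_le_add hnormE hnormX
  _ = Real.sqrt (M / lamMin hP.1) * (1 + Real.sqrt (κ * lamMax hP.1 / (2 * ξ * lamMin hR.1))) := by
        ring
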